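/- Reordering invariance: for any two linear orders ≺ and ≺' on a finite alphabet Σ and any DFA A over Σ, there exists a DFA A' such that the Parikh image of L(A) ∩ (≺-sorted words) equals the Parikh image of L(A') ∩ (≺'-sorted words). -/

import Mathlib

/-- A word is sorted w.r.t. a strict order `r` if consecutive letters are
nondecreasing (related by the reflexive closure of `r`); these are exactly
the words in `f₁* f₂* ⋯ fₙ*` for the `r`-enumeration `f₁ ≺ ⋯ ≺ fₙ`. -/
def SortedWrt {α : Type*} (r : α → α → Prop) (w : List α) : Prop :=
  w.Pairwise (fun a b => r a b ∨ a = b)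

/-- The Parikh image of the `r`-sorted part of the language of a DFA. -/
def orderedParikh {α : Type*} (r : α → α → Prop) {σ : Type*} (A : DFA α σ) :
    Set (Multiset α) :=
  {ψ | ∃ w : List α, w ∈ A.accepts ∧ SortedWrt r w ∧ (↑w : Multiset α) = ψ}



open Function List

section Aux

variable {α : Type*} {σ : Type*}

/-- join of per-letter replicates along a list of letters -/
def repJoin (l : List α) (c : α → ℕ) : List α :=
  l.flatMap fun a => List.replicate (c a) a

lemma repJoin_cons (a : α) (l : List α) (c : α → ℕ) :
    repJoin (a :: l) c = List.replicate (c a) a ++ repJoin l c := by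
  simp [repJoin]

lemma mem_repJoin {y : α} {l : List α} {c : α → ℕ} (h : y ∈ repJoin l c) : y ∈ l := by
  obtain ⟨a, ha, hy⟩ := List.mem_flatMap.mp h
  rwa [List.eq_of_mem_replicate hy]

lemma count_repJoin [DecidableEq α] (c : α → ℕ) (a : α) :
    ∀ (l : List α), l.Nodup → (repJoin l c).count a = if a ∈ l then c a else 0 := by
  intro l hl
  induction l with
  | nil => simp [repJoin]
  | cons b l ih =>
    rw [repJoin_cons, List.count_append, List.count_replicate,
      ih (List.Nodup.of_cons hl)]
    by_cases hab : a = b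
    · subst hab
      simp [(List.nodup_cons.mp hl).1]
    · simp [hab, Ne.symm hab]

lemma sorted_repJoin (s : α → α → Prop) (hrefl : ∀ a, s a a) (c : α → ℕ) :
    ∀ (l : List α), l.Pairwise s → (repJoin l c).Pairwise s := by
  intro l hl
  induction l with
  | nil => simp [repJoin, List.Pairwise]
  | cons b l ih =>
    rw [List.pairwise_cons] at hl
    rw [repJoin_cons]
    rw [List.pairwise_append]
    refine ⟨List.pairwise_replicate.mpr (Or.inr (hrefl b)), ih hl.2, ?_⟩
    intro x hx y hy
    rw [List.eq_of_mem_replicate hx]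
    exact hl.1 y (mem_repJoin hy)

lemma evalFrom_replicate (A : DFA α σ) (q : σ) (a : α) (n : ℕ) :
    A.evalFrom q (List.replicate n a) = (fun p => A.step p a)^[n] q := by
  induction n generalizing q with
  | zero => simp [DFA.evalFrom]
  | succ n ih =>
    rw [List.replicate_succ]
    show A.evalFrom (A.step q a) (List.replicate n a) = _
    rw [ih, ← Function.iterate_succ_apply]

lemma evalFrom_repJoin_congr (A : DFA α σ) (c c' : α → ℕ)
    (h : ∀ (a : α) (q : σ), (fun p => A.step p a)^[c a] q = (fun p => A.step p a)^[c' a] q)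
    (l : List α) (q : σ) :
    A.evalFrom q (repJoin l c) = A.evalFrom q (repJoin l c') := by
  induction l generalizing q with
  | nil => rfl
  | cons b l ih =>
    rw [repJoin_cons, repJoin_cons, DFA.evalFrom_of_append, DFA.evalFrom_of_append,
      evalFrom_replicate, evalFrom_replicate, h b q, ih]

/-- eventual periodicity of iteration on a finite type -/
lemma iterate_card_add_factorial [Fintype σ] (f : σ → σ) (q : σ) :
    f^[Fintype.card σ + Nat.factorial (Fintype.card σ)] q = f^[Fintype.card σ] q := by
  set n := Fintype.card σ with hn
  obtain ⟨x, y, hxy, hfxy⟩ :=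
    Fintype.exists_ne_map_eq_of_card_lt (fun i : Fin (n + 1) => f^[(i : ℕ)] q) (by simp [hn])
  -- wlog x < y
  obtain ⟨i, j, hij, heq⟩ : ∃ i j : ℕ, i < j ∧ j ≤ n ∧ f^[i] q = f^[j] q := by
    rcases lt_trichotomy (x : ℕ) (y : ℕ) with h | h | h
    · exact ⟨x, y, h, Nat.lt_succ_iff.mp y.isLt, hfxy⟩
    · exact absurd (Fin.ext h) hxy
    · exact ⟨y, x, h, Nat.lt_succ_iff.mp x.isLt, hfxy.symm⟩
  obtain ⟨hjn, heq⟩ := heq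
  set p := j - i with hp
  have hp0 : 0 < p := Nat.sub_pos_of_lt hij
  have hA : ∀ m, i ≤ m → f^[m + p] q = f^[m] q := by
    intro m hm
    obtain ⟨d, rfl⟩ := Nat.exists_eq_add_of_le hm
    have h1 : i + d + p = d + j := by omega
    have h2 : i + d = d + i := by omega
    rw [h1, h2, Function.iterate_add_apply, Function.iterate_add_apply, heq]
  have hB : ∀ cnt m, i ≤ m → f^[m + cnt * p] q = f^[m] q := by
    intro cnt
    induction cnt with
    | zero => simp
    | succ cnt ih =>
      intro m hm
      have : m + (cnt + 1) * p = (m + cnt * p) + p := by ring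
      rw [this, hA _ (le_trans hm (Nat.le_add_right _ _)), ih m hm]
  have hdvd : p ∣ Nat.factorial n := Nat.dvd_factorial hp0 (by omega)
  obtain ⟨e, he⟩ := hdvd
  have : n + Nat.factorial n = n + e * p := by rw [he]; ring
  rw [this, hB e n (by omega)]

/-- capped successor: counts up to N-1, wrapping back to T -/
def nsucc (N T : ℕ) (m : ℕ) : ℕ := if m + 1 < N then m + 1 else T

/-- capped counter value after k increments -/
def capN (N T : ℕ) (k : ℕ) : ℕ := (nsucc N T)^[k] 0

lemma capN_lt {N T : ℕ} (hN : 0 < N) (hT : T < N) (k : ℕ) : capN N T k < N := by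
  induction k with
  | zero => exact hN
  | succ k ih =>
    rw [capN, Function.iterate_succ_apply', nsucc]
    split <;> omega

lemma capN_succ (N T k : ℕ) : capN N T (k + 1) = nsucc N T (capN N T k) :=
  Function.iterate_succ_apply' _ _ _

/-- the key property: iterating a function on a finite type `capN` many times
agrees with iterating it the true number of times -/
lemma iterate_capN [Fintype σ] (f : σ → σ) (k : ℕ) (q : σ) :
    f^[capN (Fintype.card σ + Nat.factorial (Fintype.card σ)) (Fintype.card σ) k] q = f^[k] q := by
  set T := Fintype.card σ with hT
  set N := T + Nat.factorial T with hN
  have hNpos : 0 < N := by have := Nat.factorial_pos T; omega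
  have hTN : T < N := by have := Nat.factorial_pos T; omega
  induction k generalizing q with
  | zero => rfl
  | succ k ih =>
    rw [capN_succ, Function.iterate_succ_apply' f k q, ← ih q,
      ← Function.iterate_succ_apply' f (capN N T k) q]
    rw [nsucc]
    split
    · rfl
    · have h1 : capN N T k + 1 = N := by
        have := capN_lt hNpos hTN k
        omega
      rw [Nat.succ_eq_add_one, h1, hN]
      exact (iterate_card_add_factorial f q).symm

/-- the letter-counting DFA: states are capped count vectors -/
def countDFA (α : Type*) [DecidableEq α] (N T : ℕ) (hN : 0 < N) (hT : T < N)
    (Acc : Set (α → Fin N)) : DFA α (α → Fin N) where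
  step g a := fun b => if b = a then ⟨nsucc N T (g b), by unfold nsucc; split <;> omega⟩ else g b
  start := fun _ => ⟨0, hN⟩
  accept := Acc

lemma countDFA_evalFrom {α : Type*} [DecidableEq α] (N T : ℕ) (hN : 0 < N) (hT : T < N)
    (Acc : Set (α → Fin N)) (w : List α) :
    ∀ (c : α → ℕ),
    (countDFA α N T hN hT Acc).evalFrom (fun b => ⟨capN N T (c b), capN_lt hN hT _⟩) w
      = fun b => ⟨capN N T (c b + w.count b), capN_lt hN hT _⟩ := by
  induction w with
  | nil => intro c; funext b; simp [DFA.evalFrom]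
  | cons a w ih =>
    intro c
    show (countDFA α N T hN hT Acc).evalFrom
      ((countDFA α N T hN hT Acc).step (fun b => ⟨capN N T (c b), capN_lt hN hT _⟩) a) w = _
    have hstep : (countDFA α N T hN hT Acc).step
        (fun b => ⟨capN N T (c b), capN_lt hN hT _⟩) a
        = fun b => ⟨capN N T ((fun x => if x = a then c x + 1 else c x) b), capN_lt hN hT _⟩ := by
      funext b
      show (if b = a then _ else _) = _
      by_cases hba : b = a
      · simp only [hba, if_pos rfl]
        exact Fin.ext (capN_succ N T (c a)).symm
      · simp [hba]
    rw [hstep, ih]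
    funext b
    apply Fin.ext
    show capN N T _ = capN N T _
    congr 1
    by_cases hba : b = a <;> simp [hba, List.count_cons] <;> grind

lemma countDFA_eval {α : Type*} [DecidableEq α] (N T : ℕ) (hN : 0 < N) (hT : T < N)
    (Acc : Set (α → Fin N)) (w : List α) :
    (countDFA α N T hN hT Acc).eval w = fun b => ⟨capN N T (w.count b), capN_lt hN hT _⟩ := by
  have h0 : ((countDFA α N T hN hT Acc).start)
      = fun b : α => (⟨capN N T ((fun _ => 0) b), capN_lt hN hT _⟩ : Fin N) := rfl
  show (countDFA α N T hN hT Acc).evalFrom _ w = _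
  rw [h0, countDFA_evalFrom]
  simp

end Aux


section Main

lemma exists_enum {α : Type*} [Fintype α] [DecidableEq α] (r : α → α → Prop)
    (hr : IsStrictTotalOrder α r) :
    ∃ l : List α, (∀ (c : α → ℕ) (a : α), (repJoin l c).count a = c a) ∧
      (∀ c : α → ℕ, SortedWrt r (repJoin l c)) ∧
      (∀ w : List α, SortedWrt r w → w = repJoin l (fun a => w.count a)) := by
  classical
  set s : α → α → Prop := fun a b => r a b ∨ a = b with hs
  haveI : IsIrrefl α r := hr.toIsStrictOrder.toIrrefl
  haveI : IsTrans α r := hr.toIsTrans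
  haveI hstrans : IsTrans α s := ⟨by
    rintro a b c (hab | rfl) (hbc | rfl)
    · exact Or.inl (Trans.trans hab hbc)
    · exact Or.inl hab
    · exact Or.inl hbc
    · exact Or.inr rfl⟩
  haveI hsanti : IsAntisymm α s := ⟨by
    rintro a b hab hba
    rcases hab with hab | rfl
    · rcases hba with hba | h
      · exact absurd (Trans.trans hab hba) (irrefl a)
      · exact h.symm
    · rfl⟩
  haveI hstotal : IsTotal α s := ⟨by
    intro a b
    by_cases h1 : r a b
    · exact Or.inl (Or.inl h1)
    by_cases h2 : r b a
    · exact Or.inr (Or.inl h2)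
    · exact Or.inl (Or.inr (hr.trichotomous a b h1 h2))⟩
  refine ⟨Finset.sort Finset.univ s, ?_, ?_, ?_⟩
  · intro c a
    rw [count_repJoin c a _ (Finset.sort_nodup Finset.univ s)]
    simp [Finset.mem_sort]
  · intro c
    exact sorted_repJoin s (fun a => Or.inr rfl) c _ (Finset.pairwise_sort Finset.univ s)
  · intro w hw
    have hsorted' : SortedWrt r (repJoin (Finset.sort Finset.univ s) (fun a => w.count a)) :=
      sorted_repJoin s (fun a => Or.inr rfl) _ _ (Finset.pairwise_sort Finset.univ s)
    refine List.Perm.eq_of_pairwise' (r := s) hw hsorted' ?_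
    rw [List.perm_iff_count]
    intro a
    rw [count_repJoin _ a _ (Finset.sort_nodup Finset.univ s)]
    simp [Finset.mem_sort]

lemma orderedParikh_congr {α : Type*} (r : α → α → Prop) {σ σ' : Type*}
    (A : DFA α σ) (A' : DFA α σ') (h : A.accepts = A'.accepts) :
    orderedParikh r A = orderedParikh r A' := by
  unfold orderedParikh
  rw [h]

/-- Reordering invariance: for any two linear orders `≺`, `≺'` on a finite
alphabet and any DFA `A`, there is a DFA `A'` such that the Parikh image of
`L(A) ∩ (≺-sorted words)` equals the Parikh image of `L(A') ∩ (≺'-sorted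
words)`. -/
theorem stmt9 {α : Type*} [Fintype α] (r r' : α → α → Prop)
    (hr : IsStrictTotalOrder α r) (hr' : IsStrictTotalOrder α r')
    {σ : Type*} [Fintype σ] (A : DFA α σ) :
    ∃ (σ' : Type) (_ : Fintype σ') (A' : DFA α σ'),
      orderedParikh r A = orderedParikh r' A' := by
  classical
  obtain ⟨l, hlcount, hlsorted, hluniq⟩ := exists_enum r hr
  obtain ⟨l', hl'count, hl'sorted, hl'uniq⟩ := exists_enum r' hr'
  set T := Fintype.card σ with hT
  set N := T + Nat.factorial T with hN
  have hNpos : 0 < N := by have := Nat.factorial_pos T; omega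
  have hTN : T < N := by have := Nat.factorial_pos T; omega
  set Acc : Set (α → Fin N) := {g | repJoin l (fun a => ((g a : Fin N) : ℕ)) ∈ A.accepts}
    with hAcc
  set B : DFA α (α → Fin N) := countDFA α N T hNpos hTN Acc with hBdef
  have hB : ∀ w : List α, w ∈ B.accepts ↔ repJoin l (fun a => w.count a) ∈ A.accepts := by
    intro w
    rw [DFA.mem_accepts, hBdef, countDFA_eval]
    show repJoin l (fun a => capN N T (w.count a)) ∈ A.accepts ↔ _
    rw [DFA.mem_accepts, DFA.mem_accepts]
    show A.evalFrom A.start _ ∈ A.accept ↔ A.evalFrom A.start _ ∈ A.accept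
    rw [evalFrom_repJoin_congr A (fun a => capN N T (w.count a)) (fun a => w.count a)
      (fun a q => by rw [hN, hT]; exact iterate_capN (fun p => A.step p a) (w.count a) q)]
  have key : orderedParikh r A = orderedParikh r' B := by
    ext ψ
    constructor
    · rintro ⟨w, hwacc, hwsort, rfl⟩
      refine ⟨repJoin l' (fun a => w.count a), ?_, hl'sorted _, ?_⟩
      · rw [hB]
        have hcc : (fun a => (repJoin l' (fun a => w.count a)).count a)
            = fun a => w.count a := by
          funext a; exact hl'count _ a
        rw [hcc, ← hluniq w hwsort]
        exact hwacc
      · rw [Multiset.coe_eq_coe, List.perm_iff_count]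
        intro a
        exact hl'count _ a
    · rintro ⟨w', h'acc, h'sort, rfl⟩
      refine ⟨repJoin l (fun a => w'.count a), ?_, hlsorted _, ?_⟩
      · exact (hB w').mp h'acc
      · rw [Multiset.coe_eq_coe, List.perm_iff_count]
        intro a
        exact hlcount _ a
  refine ⟨Fin (Fintype.card α) → Fin N, inferInstance,
    DFA.reindex (Equiv.arrowCongr (Fintype.equivFin α) (Equiv.refl (Fin N))) B, ?_⟩
  rw [key]
  exact orderedParikh_congr r' B _ (DFA.accepts_reindex _ _).symm

end Main
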